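/- For any vector r ∈ ℝ^{N−1} with entries r_2,…,r_N, the interpolation polynomial λ(τ) = ∑_{i=1}^N (A† r)_i L_i(τ), where (A† r)_i denotes the i-th entry of A† r, has degree at most N−2. -/

import Mathlib

open Polynomial Finset

/-- `lagL τ i` is the `i`-th Lagrange basis polynomial (of degree `N - 1`)
for the nodes `τ 0, …, τ (N-1)`, satisfying `(lagL τ i).eval (τ j) = δᵢⱼ`. -/
noncomputable def lagL {N : ℕ} (τ : Fin N → ℝ) (i : Fin N) : ℝ[X] :=
  Lagrange.basis Finset.univ τ i

/-- `lagLp τ` is the polynomial `L_p(x) = ∏ᵢ (x - τᵢ)`. -/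
noncomputable def lagLp {N : ℕ} (τ : Fin N → ℝ) : ℝ[X] :=
  ∏ i, (X - C (τ i))

/-- The differentiation matrix `D`, with `D i j = L_j'(τ i)`. -/
noncomputable def matD {N : ℕ} (τ : Fin N → ℝ) : Matrix (Fin N) (Fin N) ℝ :=
  fun i j => (derivative (lagL τ j)).eval (τ i)

/-- The vector `D_p`, with `(D_p) i = L_p'(τ i)`. -/
noncomputable def vecDp {N : ℕ} (τ : Fin N → ℝ) : Fin N → ℝ :=
  fun i => (derivative (lagLp τ)).eval (τ i)

/-- Columns `2, …, N+1` (in 1-based numbering) of the augmented differentiation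
matrix `D̃ = [D  D_p]`: column `j` (0-based, `j < N - 1`) is column `j + 1` of `D`,
and the last column is `D_p`. -/
noncomputable def matDtil2 {N : ℕ} (τ : Fin N → ℝ) : Matrix (Fin N) (Fin N) ℝ :=
  fun i j => if h : (j : ℕ) + 1 < N then matD τ i ⟨(j : ℕ) + 1, h⟩ else vecDp τ i

/-- The quadrature rule with nodes `τ` and weights `w` integrates exactly all
polynomials of degree at most `2 * N - 3` over `[-1, 1]`. -/
def IsQuadrature {N : ℕ} (τ : Fin N → ℝ) (w : Fin N → ℝ) : Prop :=
  ∀ p : ℝ[X], p.natDegree ≤ 2 * N - 3 →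
    ∑ i, w i * p.eval (τ i) = ∫ t in (-1 : ℝ)..1, p.eval t

/-- The integration matrix `A` with rows indexed (0-based) by `i : Fin (N-1)`
corresponding to the node `τ (i+1)`: `A i j = ∫_{-1}^{τ (i+1)} L_j(t) dt`. -/
noncomputable def matA {N : ℕ} (τ : Fin N → ℝ) : Matrix (Fin (N - 1)) (Fin N) ℝ :=
  fun i j => ∫ t in (-1 : ℝ)..(τ ⟨(i : ℕ) + 1, by have := i.isLt; omega⟩), (lagL τ j).eval t

/-- The row vector `A_p`, with `(A_p) j = (1/N) ∏_{k ≠ j} 1 / (τ j - τ k)`. -/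
noncomputable def rowAp {N : ℕ} (τ : Fin N → ℝ) : Fin N → ℝ :=
  fun j => (1 / (N : ℝ)) * ∏ k ∈ Finset.univ.erase j, (τ j - τ k)⁻¹

/-- The matrix `Ã` obtained by stacking `A` on top of the row vector `A_p`. -/
noncomputable def matAtil {N : ℕ} (τ : Fin N → ℝ) : Matrix (Fin N) (Fin N) ℝ :=
  fun i j => if h : (i : ℕ) + 1 < N then matA τ ⟨(i : ℕ), by omega⟩ j else rowAp τ j

/-- The adjoint integration matrix `A† = W⁻¹ Aᵀ W_{2:N}`, with columns indexed
(0-based) by `j : Fin (N-1)` corresponding to the node `τ (j+1)`. -/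
noncomputable def matAdag {N : ℕ} (τ : Fin N → ℝ) (w : Fin N → ℝ) :
    Matrix (Fin N) (Fin (N - 1)) ℝ :=
  fun i j => (w i)⁻¹ * matA τ j i * w ⟨(j : ℕ) + 1, by have := j.isLt; omega⟩

/-- `polyM τ k` is the Lagrange basis polynomial (of degree `N - 3`) for the
interior nodes `τ 1, …, τ (N-2)`, satisfying `(polyM τ k).eval (τ m) = δₖₘ`
for interior indices `m`. -/
noncomputable def polyM {N : ℕ} (τ : Fin N → ℝ) (k : Fin N) : ℝ[X] :=
  Lagrange.basis (Finset.univ.filter fun m : Fin N => 0 < (m : ℕ) ∧ (m : ℕ) < N - 1) τ k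

/-- The polynomial `λ(x) = ∑ᵢ (A† r)ᵢ Lᵢ(x)`. -/
noncomputable def lamP {N : ℕ} (τ : Fin N → ℝ) (w : Fin N → ℝ) (r : Fin (N - 1) → ℝ) : ℝ[X] :=
  ∑ i, C ((matAdag τ w).mulVec r i) * lagL τ i

/-- Formal antiderivative of a polynomial. -/
noncomputable def antider (p : ℝ[X]) : ℝ[X] :=
  p.sum fun n a => C (a / (n + 1)) * X ^ (n + 1)

lemma derivative_antider (p : ℝ[X]) : derivative (antider p) = p := by
  unfold antider
  rw [Polynomial.sum_def, derivative_sum]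
  conv_rhs => rw [← p.sum_C_mul_X_pow_eq]
  rw [Polynomial.sum_def]
  refine Finset.sum_congr rfl fun n hn => ?_
  have hne : ((n : ℝ) + 1) ≠ 0 := by positivity
  rw [derivative_C_mul, derivative_X_pow]
  push_cast
  rw [← mul_assoc, ← C_mul]
  congr 2
  field_simp

lemma natDegree_antider_le (p : ℝ[X]) : (antider p).natDegree ≤ p.natDegree + 1 := by
  unfold antider
  rw [Polynomial.sum_def]
  refine natDegree_sum_le_of_forall_le _ _ fun n hn => ?_
  refine (natDegree_mul_le).trans ?_
  have : n ≤ p.natDegree := le_natDegree_of_mem_supp n hn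
  simp only [natDegree_C, natDegree_X_pow]
  omega

lemma integral_derivative_eval (q : ℝ[X]) (a b : ℝ) :
    ∫ t in a..b, (derivative q).eval t = q.eval b - q.eval a := by
  refine intervalIntegral.integral_eq_sub_of_hasDerivAt (fun x _ => q.hasDerivAt x) ?_
  exact ((derivative q).continuous_aeval).intervalIntegrable _ _

lemma integral_eval (p : ℝ[X]) (a b : ℝ) :
    ∫ t in a..b, p.eval t = (antider p).eval b - (antider p).eval a := by
  rw [← integral_derivative_eval (antider p) a b, derivative_antider]

lemma coeff_basis_card_sub_one {F : Type*} [Field F] {ι : Type*} [DecidableEq ι]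
    {s : Finset ι} {v : ι → F} {i : ι} (hvs : Set.InjOn v s) (hi : i ∈ s) :
    (Lagrange.basis s v i).coeff (#s - 1) = Lagrange.nodalWeight s v i := by
  rw [← Lagrange.natDegree_basis hvs hi, ← leadingCoeff, Lagrange.basis, leadingCoeff_prod,
    Lagrange.nodalWeight]
  refine Finset.prod_congr rfl fun j hj => ?_
  rw [Lagrange.basisDivisor, leadingCoeff_mul, leadingCoeff_C, leadingCoeff_X_sub_C, mul_one]

lemma sum_nodalWeight_mul_eval {N : ℕ} (hN : 2 ≤ N) {τ : Fin N → ℝ} (hinj : Function.Injective τ)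
    {ψ : ℝ[X]} (hψ : ψ.natDegree ≤ N - 2) :
    ∑ i, Lagrange.nodalWeight Finset.univ τ i * ψ.eval (τ i) = 0 := by
  have hvs : Set.InjOn τ (Finset.univ : Finset (Fin N)) := fun a _ b _ h => hinj h
  have hcard : #(Finset.univ : Finset (Fin N)) = N := by simp
  have hdeg : ψ.degree < (#(Finset.univ : Finset (Fin N)) : WithBot ℕ) := by
    rw [hcard]
    exact lt_of_le_of_lt degree_le_natDegree (Nat.cast_lt.mpr (by omega))
  have hint := Lagrange.eq_interpolate hvs hdeg
  have hco := congrArg (fun p : ℝ[X] => p.coeff (N - 1)) hint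
  simp only [Lagrange.interpolate_apply, finset_sum_coeff, coeff_C_mul] at hco
  have hz : ψ.coeff (N - 1) = 0 := coeff_eq_zero_of_natDegree_lt (by omega)
  rw [hz] at hco
  rw [hco]
  refine Finset.sum_congr rfl fun i _ => ?_
  have hcb := coeff_basis_card_sub_one hvs (Finset.mem_univ i)
  rw [hcard] at hcb
  rw [hcb, mul_comm]

/-- The polynomial `λ = ∑ᵢ (A† r)ᵢ Lᵢ` has degree at most `N - 2`. -/
theorem stmt7 (N : ℕ) (hN : 3 ≤ N) (τ : Fin N → ℝ) (hmono : StrictMono τ)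
    (h0 : τ ⟨0, by omega⟩ = -1) (h1 : τ ⟨N - 1, by omega⟩ = 1) (w : Fin N → ℝ) (hw : ∀ i, 0 < w i) (hquad : IsQuadrature τ w) :
    ∀ r : Fin (N - 1) → ℝ, (lamP τ w r).natDegree ≤ N - 2 := by
  intro r
  have hinj : Function.Injective τ := hmono.injective
  have hvs : Set.InjOn τ (Finset.univ : Finset (Fin N)) := fun a _ b _ h => hinj h
  have hcard : #(Finset.univ : Finset (Fin N)) = N := by simp
  have hw0 : ∀ i, w i ≠ 0 := fun i => (hw i).ne'
  set c : Fin N → ℝ := fun i => Lagrange.nodalWeight Finset.univ τ i with hc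
  set φ : ℝ[X] := ∑ i, C (c i / w i) * lagL τ i with hφ
  set g : ℝ[X] := antider φ - C ((antider φ).eval (-1)) with hgdef
  have hLdeg : ∀ i : Fin N, (lagL τ i).natDegree = N - 1 := fun i => by
    rw [lagL, Lagrange.natDegree_basis hvs (Finset.mem_univ i), hcard]
  have hφdeg : φ.natDegree ≤ N - 1 := by
    rw [hφ]
    exact natDegree_sum_le_of_forall_le _ _ fun i _ =>
      (natDegree_C_mul_le _ _).trans (le_of_eq (hLdeg i))
  have hφeval : ∀ i, φ.eval (τ i) = c i / w i := by
    intro i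
    rw [hφ, eval_finset_sum, Finset.sum_eq_single i]
    · rw [eval_mul, eval_C, lagL, Lagrange.eval_basis_self hvs (Finset.mem_univ i), mul_one]
    · intro j _ hji
      rw [eval_mul, eval_C, lagL, Lagrange.eval_basis_of_ne hji (Finset.mem_univ i), mul_zero]
    · simp
  have hgder : derivative g = φ := by
    rw [hgdef, derivative_sub, derivative_antider, derivative_C, sub_zero]
  have hgeval : ∀ x : ℝ, g.eval x = ∫ t in (-1:ℝ)..x, φ.eval t := by
    intro x
    rw [integral_eval, hgdef]
    simp
  have hgm1 : g.eval (-1) = 0 := by rw [hgdef]; simp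
  have hsumc : ∑ i, c i = 0 := by
    have h6 := sum_nodalWeight_mul_eval (show 2 ≤ N by omega) hinj
      (ψ := (1 : ℝ[X])) (by simp)
    simpa using h6
  have hg1 : g.eval 1 = 0 := by
    rw [hgeval, ← hquad φ (hφdeg.trans (by omega))]
    rw [← hsumc]
    refine Finset.sum_congr rfl fun i _ => ?_
    rw [hφeval i, mul_div_assoc', mul_comm, mul_div_assoc, div_self (hw0 i), mul_one]
  have key : ∀ χ : ℝ[X], χ.natDegree ≤ N - 3 →
      ∑ i, w i * (g.eval (τ i) * χ.eval (τ i)) = 0 := by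
    intro χ hχ
    set ψ := antider χ with hψdef
    have hψdeg : ψ.natDegree ≤ N - 2 := (natDegree_antider_le χ).trans (by omega)
    have hψder : derivative ψ = χ := derivative_antider χ
    have hgdeg : g.natDegree ≤ N := by
      rw [hgdef]
      refine (natDegree_sub_le _ _).trans ?_
      simp only [natDegree_C]
      exact max_le ((natDegree_antider_le φ).trans (by omega)) (by omega)
    have hpdeg : (derivative (g * ψ)).natDegree ≤ 2 * N - 3 := by
      refine (natDegree_derivative_le _).trans ?_
      have := natDegree_mul_le (p := g) (q := ψ)
      omega
    have h2 := hquad _ hpdeg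
    rw [integral_derivative_eval, eval_mul, eval_mul, hg1, hgm1] at h2
    have h4 : ∑ i, w i * (derivative (g * ψ)).eval (τ i) = 0 := by
      rw [h2]; ring
    have h5 : ∑ i, (c i * ψ.eval (τ i) + w i * (g.eval (τ i) * χ.eval (τ i))) = 0 := by
      rw [← h4]
      refine Finset.sum_congr rfl fun i _ => ?_
      rw [derivative_mul, eval_add, eval_mul, eval_mul, hgder, hψder, hφeval i, mul_add,
        show w i * (c i / w i * eval (τ i) ψ) = c i * eval (τ i) ψ from by
          field_simp
          rw [mul_assoc]; exact mul_div_cancel_left₀ _ (hw0 i)]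
    rw [Finset.sum_add_distrib] at h5
    have h6 : ∑ i, c i * ψ.eval (τ i) = 0 :=
      sum_nodalWeight_mul_eval (show 2 ≤ N by omega) hinj hψdeg
    rw [h6, zero_add] at h5
    exact h5
  -- interpolant of g at the nodes
  set T := Lagrange.interpolate Finset.univ τ (fun i => g.eval (τ i)) with hT
  have hTnode : ∀ i, T.eval (τ i) = g.eval (τ i) := fun i =>
    Lagrange.eval_interpolate_at_node _ hvs (Finset.mem_univ i)
  have hT1 : T.eval 1 = 0 := by
    have := hTnode ⟨N - 1, by omega⟩
    rw [h1] at this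
    rw [this, hg1]
  have hTm1 : T.eval (-1) = 0 := by
    have := hTnode ⟨0, by omega⟩
    rw [h0] at this
    rw [this, hgm1]
  obtain ⟨T1, hT1eq⟩ := (dvd_iff_isRoot (a := (1:ℝ)) (p := T)).mpr hT1
  have hT1m : T1.eval (-1) = 0 := by
    have h' : T.eval (-1) = (-1 - 1) * T1.eval (-1) := by rw [hT1eq]; simp
    rw [hTm1] at h'
    linarith
  obtain ⟨H, hHeq⟩ := (dvd_iff_isRoot (a := (-1:ℝ)) (p := T1)).mpr hT1m
  have hTfac : T = (X - C 1) * (X - C (-1)) * H := by rw [hT1eq, hHeq, mul_assoc]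
  have hHdeg : H.natDegree ≤ N - 3 := by
    rcases eq_or_ne H 0 with h | h
    · simp [h]
    · have hTne : T ≠ 0 := by
        rw [hTfac]
        exact mul_ne_zero (mul_ne_zero (X_sub_C_ne_zero 1) (X_sub_C_ne_zero (-1))) h
      have hdT : T.natDegree < N := by
        have hd := Lagrange.degree_interpolate_lt (r := fun i => g.eval (τ i)) hvs
        rw [hcard] at hd
        exact (natDegree_lt_iff_degree_lt hTne).mpr (by exact_mod_cast hd)
      have heq : T.natDegree = 2 + H.natDegree := by
        rw [hTfac, natDegree_mul (mul_ne_zero (X_sub_C_ne_zero 1) (X_sub_C_ne_zero (-1))) h,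
          natDegree_mul (X_sub_C_ne_zero 1) (X_sub_C_ne_zero (-1)), natDegree_X_sub_C,
          natDegree_X_sub_C]
      omega
  have hgfac : ∀ i, g.eval (τ i) = (τ i - 1) * ((τ i + 1) * H.eval (τ i)) := by
    intro i
    rw [← hTnode i, hTfac]
    simp [mul_assoc]
  have hterm := key H hHdeg
  have hle1 : ∀ i : Fin N, τ i ≤ 1 := by
    intro i
    rw [← h1]
    refine hmono.monotone ?_
    rw [Fin.le_def]
    show (i : ℕ) ≤ N - 1
    have := i.isLt
    omega
  have hgem1 : ∀ i : Fin N, -1 ≤ τ i := by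
    intro i
    rw [← h0]
    refine hmono.monotone ?_
    rw [Fin.le_def]
    show 0 ≤ (i : ℕ)
    omega
  have hnonpos : ∀ i ∈ (Finset.univ : Finset (Fin N)),
      w i * (g.eval (τ i) * H.eval (τ i)) ≤ 0 := by
    intro i _
    rw [hgfac i]
    have hA : 0 ≤ w i * ((τ i + 1) * H.eval (τ i) ^ 2) :=
      mul_nonneg (hw i).le (mul_nonneg (by linarith [hgem1 i]) (sq_nonneg _))
    nlinarith [hA, hle1 i]
  have hzeroeach := (Finset.sum_eq_zero_iff_of_nonpos hnonpos).mp hterm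
  have hgnode : ∀ m : Fin N, g.eval (τ m) = 0 := by
    intro m
    by_cases hm0 : (m : ℕ) = 0
    · have hm : m = ⟨0, by omega⟩ := Fin.ext hm0
      rw [hm, h0, hgm1]
    · by_cases hmN : (m : ℕ) = N - 1
      · have hm : m = ⟨N - 1, by omega⟩ := Fin.ext hmN
        rw [hm, h1, hg1]
      · have hz := hzeroeach m (Finset.mem_univ m)
        have hlt1 : τ m < 1 := by
          rw [← h1]
          refine hmono ?_
          rw [Fin.lt_def]
          show (m : ℕ) < N - 1
          have := m.isLt
          omega
        have hgtm1 : -1 < τ m := by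
          rw [← h0]
          refine hmono ?_
          rw [Fin.lt_def]
          show 0 < (m : ℕ)
          omega
        rw [hgfac m] at hz ⊢
        have hH : H.eval (τ m) = 0 := by
          by_contra hHne
          have hp : 0 < H.eval (τ m) ^ 2 :=
            lt_of_le_of_ne (sq_nonneg _) (Ne.symm (pow_ne_zero 2 hHne))
          have hneg : w m * ((τ m - 1) * ((τ m + 1) * H.eval (τ m)) * H.eval (τ m)) < 0 := by
            nlinarith [hw m, hp, mul_pos (mul_pos (hw m) (show (0:ℝ) < τ m + 1 by linarith)) hp]
          exact hneg.ne hz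
        rw [hH]
        ring
  have hinner : ∀ j : Fin (N - 1), ∑ i, c i / w i * matA τ j i = 0 := by
    intro j
    have hrw : ∀ i : Fin N, c i / w i * matA τ j i
        = ∫ t in (-1:ℝ)..(τ ⟨(j : ℕ) + 1, by have := j.isLt; omega⟩),
            c i / w i * (lagL τ i).eval t := by
      intro i
      rw [matA, intervalIntegral.integral_const_mul]
    rw [Finset.sum_congr rfl fun i _ => hrw i,
      ← intervalIntegral.integral_finset_sum (f := fun i t => c i / w i * (lagL τ i).eval t) (fun i _ =>
        (Continuous.intervalIntegrable (continuous_const.mul (lagL τ i).continuous) _ _)),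
      intervalIntegral.integral_congr (g := fun t => φ.eval t) (fun t _ => by
        show ∑ i, c i / w i * eval t (lagL τ i) = eval t φ
        rw [hφ, eval_finset_sum]
        exact (Finset.sum_congr rfl fun i _ => by rw [eval_mul, eval_C]).symm),
      ← hgeval]
    exact hgnode _
  have hlamdeg : (lamP τ w r).natDegree ≤ N - 1 := by
    have hl : lamP τ w r = ∑ i, C ((matAdag τ w).mulVec r i) * lagL τ i := rfl
    rw [hl]
    exact natDegree_sum_le_of_forall_le _ _ fun i _ =>
      (natDegree_C_mul_le _ _).trans (le_of_eq (hLdeg i))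
  have hcoeff : (lamP τ w r).coeff (N - 1) = 0 := by
    have hl : lamP τ w r = ∑ i, C ((matAdag τ w).mulVec r i) * lagL τ i := rfl
    rw [hl, finset_sum_coeff]
    have hstep : ∀ i : Fin N, (C ((matAdag τ w).mulVec r i) * lagL τ i).coeff (N - 1)
        = (matAdag τ w).mulVec r i * c i := by
      intro i
      rw [coeff_C_mul]
      congr 1
      have hcb := coeff_basis_card_sub_one hvs (Finset.mem_univ i)
      rw [hcard] at hcb
      exact hcb
    rw [Finset.sum_congr rfl fun i _ => hstep i]
    have hexp : ∀ i : Fin N, (matAdag τ w).mulVec r i * c i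
        = ∑ j, (c i / w i * matA τ j i) *
            (w ⟨(j : ℕ) + 1, by have := j.isLt; omega⟩ * r j) := by
      intro i
      rw [Matrix.mulVec, dotProduct, Finset.sum_mul]
      refine Finset.sum_congr rfl fun j _ => ?_
      simp only [matAdag]
      rw [div_eq_mul_inv]
      ring
    rw [Finset.sum_congr rfl fun i _ => hexp i, Finset.sum_comm]
    refine Finset.sum_eq_zero fun j _ => ?_
    rw [← Finset.sum_mul, hinner j, zero_mul]
  rw [natDegree_le_iff_coeff_eq_zero]
  intro m hm
  rcases eq_or_ne m (N - 1) with rfl | hne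
  · exact hcoeff
  · exact coeff_eq_zero_of_natDegree_lt (lt_of_le_of_lt hlamdeg (by omega))
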